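/- Let c ≥ 1 be a real number, let G : ℕ → ℝ be a sequence and G_∞ ∈ ℝ with G(0) ≥ G_∞, and suppose that for every n ∈ ℕ one has G(n+1) − G_∞ ≤ (1 − 1/(c(n+1))) · (G(n) − G_∞). Then for every natural number n ≥ 1 one has G(n) − G_∞ ≤ n^{-1/c} · (G(0) − G_∞). In particular the error G(n) − G_∞ decreases at least algebraically in n. -/

import Mathlib

lemma key_decay (p m : ℝ) (hp0 : 0 < p) (hp1 : p ≤ 1) (hm : 1 ≤ m) :
    (1 - p / m) * m ^ (-p) ≤ (m + 1) ^ (-p) := by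
  have hm0 : (0:ℝ) < m := lt_of_lt_of_le one_pos hm
  have hx : (1:ℝ) < (m + 1) / m := by
    rw [lt_div_iff₀ hm0]; linarith
  have hx0 : (0:ℝ) < (m + 1) / m := by linarith
  have hlog : Real.log ((m + 1) / m) ≤ 1 / m := by
    have := Real.log_le_sub_one_of_pos hx0
    have : Real.log ((m + 1) / m) ≤ (m + 1) / m - 1 := this
    have h' : (m + 1) / m - 1 = 1 / m := by field_simp; ring
    linarith [h' ▸ this]
  have h1 : 1 - p / m ≤ ((m + 1) / m) ^ (-p) := by
    rw [Real.rpow_def_of_pos hx0]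
    have h2 : Real.log ((m + 1) / m) * (-p) ≥ -(p / m) := by
      have h3 := mul_le_mul_of_nonneg_left hlog (le_of_lt hp0)
      have h4 : p * (1 / m) = p / m := by ring
      nlinarith
    calc 1 - p / m ≤ Real.exp (-(p / m)) := by
          linarith [Real.add_one_le_exp (-(p / m))]
      _ ≤ Real.exp (Real.log ((m + 1) / m) * (-p)) := Real.exp_le_exp.mpr h2
  have hdiv : ((m + 1) / m) ^ (-p) = (m + 1) ^ (-p) / m ^ (-p) :=
    Real.div_rpow (by linarith : (0:ℝ) ≤ m + 1) (le_of_lt hm0) (-p)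
  have hmp : (0:ℝ) < m ^ (-p) := Real.rpow_pos_of_pos hm0 _
  have := mul_le_mul_of_nonneg_right h1 (le_of_lt hmp)
  rw [hdiv, div_mul_cancel₀] at this
  · exact this
  · exact ne_of_gt hmp

/-- abstract algebraic decay: if `G(n+1) - G∞ ≤ (1 - 1/(c(n+1)))(G(n) - G∞)`
for all `n`, then `G(n) - G∞ ≤ n^(-1/c) (G(0) - G∞)` for all `n ≥ 1`. -/
theorem stmt_19 (c : ℝ) (hc : 1 ≤ c) (G : ℕ → ℝ) (Ginf : ℝ) (h0 : Ginf ≤ G 0)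
    (hdec : ∀ n : ℕ, G (n + 1) - Ginf ≤ (1 - 1 / (c * ((n : ℝ) + 1))) * (G n - Ginf)) :
    ∀ n : ℕ, 1 ≤ n → G n - Ginf ≤ (n : ℝ) ^ (-1 / c) * (G 0 - Ginf) := by
  have hc0 : (0:ℝ) < c := lt_of_lt_of_le one_pos hc
  set p : ℝ := 1 / c with hp
  have hp0 : 0 < p := by positivity
  have hp1 : p ≤ 1 := by rw [hp, div_le_one hc0]; exact hc
  have hD : 0 ≤ G 0 - Ginf := by linarith
  have hneg : -1 / c = -p := by rw [hp]; ring
  have main : ∀ n : ℕ, G n - Ginf ≤ ((n : ℝ) + 1) ^ (-p) * (G 0 - Ginf) := by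
    intro n
    induction n with
    | zero => simp
    | succ n ih =>
      have hm : (1:ℝ) ≤ (n : ℝ) + 1 := by have := Nat.cast_nonneg (α := ℝ) n; linarith
      have hm0 : (0:ℝ) < (n : ℝ) + 1 := by positivity
      have ha : 1 - 1 / (c * ((n : ℝ) + 1)) = 1 - p / ((n : ℝ) + 1) := by
        rw [hp]; field_simp
      have ha0 : 0 ≤ 1 - p / ((n : ℝ) + 1) := by
        have : p / ((n : ℝ) + 1) ≤ 1 := by
          rw [div_le_one hm0]; linarith
        linarith
      calc G (n + 1) - Ginf ≤ (1 - 1 / (c * ((n : ℝ) + 1))) * (G n - Ginf) := hdec n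
        _ = (1 - p / ((n : ℝ) + 1)) * (G n - Ginf) := by rw [ha]
        _ ≤ (1 - p / ((n : ℝ) + 1)) * (((n : ℝ) + 1) ^ (-p) * (G 0 - Ginf)) :=
            mul_le_mul_of_nonneg_left ih ha0
        _ = ((1 - p / ((n : ℝ) + 1)) * ((n : ℝ) + 1) ^ (-p)) * (G 0 - Ginf) := by ring
        _ ≤ (((n : ℝ) + 1) + 1) ^ (-p) * (G 0 - Ginf) :=
            mul_le_mul_of_nonneg_right (key_decay p _ hp0 hp1 hm) hD
        _ = (((n + 1 : ℕ) : ℝ) + 1) ^ (-p) * (G 0 - Ginf) := by push_cast; ring_nf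
  intro n hn
  have hn1 : (1:ℝ) ≤ (n : ℝ) := by exact_mod_cast hn
  have hanti : ((n : ℝ) + 1) ^ (-p) ≤ (n : ℝ) ^ (-p) := by
    apply Real.rpow_le_rpow_of_nonpos (by linarith) (by linarith) (by linarith)
  rw [hneg]
  calc G n - Ginf ≤ ((n : ℝ) + 1) ^ (-p) * (G 0 - Ginf) := main n
    _ ≤ (n : ℝ) ^ (-p) * (G 0 - Ginf) := mul_le_mul_of_nonneg_right hanti hD
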